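/- Let B and M be integers with B ≥ 2 and M ≥ 1, and let I = {M, M+1, …, B·M − 1}. Then for every integer m with 1 ≤ m ≤ M − 1 and every sequence (b_k)_{k≥1} with b_k ∈ {0, 1, …, B−1} for all k, there exists a unique positive integer ℓ such that m·B^ℓ + b_1·B^{ℓ−1} + b_2·B^{ℓ−2} + ⋯ + b_ℓ ∈ I. -/

import Mathlib

open Finset

theorem stmt_14 (B M : ℤ) (hB : 2 ≤ B) (hM : 1 ≤ M) :
    ∀ m : ℤ, 1 ≤ m → m ≤ M - 1 →
      ∀ b : ℕ → ℤ, (∀ k : ℕ, 1 ≤ k → 0 ≤ b k ∧ b k ≤ B - 1) →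
        ∃! ℓ : ℕ, 0 < ℓ ∧
          M ≤ m * B ^ ℓ + ∑ k ∈ Finset.range ℓ, b (k + 1) * B ^ (ℓ - 1 - k) ∧
          m * B ^ ℓ + ∑ k ∈ Finset.range ℓ, b (k + 1) * B ^ (ℓ - 1 - k) ≤ B * M - 1 := by
  intro m hm1 hm2 b hb
  set f : ℕ → ℤ := fun ℓ => m * B ^ ℓ + ∑ k ∈ Finset.range ℓ, b (k + 1) * B ^ (ℓ - 1 - k)
    with hf
  have hB0 : (0 : ℤ) ≤ B := by linarith
  have hstep : ∀ ℓ : ℕ, f (ℓ + 1) = B * f ℓ + b (ℓ + 1) := by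
    intro ℓ
    simp only [hf]
    rw [Finset.sum_range_succ]
    have h1 : ∀ k ∈ Finset.range ℓ,
        b (k + 1) * B ^ (ℓ + 1 - 1 - k) = B * (b (k + 1) * B ^ (ℓ - 1 - k)) := by
      intro k hk
      have hk' : k < ℓ := Finset.mem_range.mp hk
      have h2 : ℓ + 1 - 1 - k = (ℓ - 1 - k) + 1 := by omega
      rw [h2]; ring
    rw [Finset.sum_congr rfl h1]
    have h3 : ℓ + 1 - 1 - ℓ = 0 := by omega
    rw [h3, ← Finset.mul_sum]
    ring
  have hpow : ∀ ℓ : ℕ, B ^ ℓ ≤ f ℓ := by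
    intro ℓ
    have hsum : 0 ≤ ∑ k ∈ Finset.range ℓ, b (k + 1) * B ^ (ℓ - 1 - k) :=
      Finset.sum_nonneg fun k _ =>
        mul_nonneg (hb (k + 1) (by omega)).1 (pow_nonneg hB0 _)
    have hp : (0:ℤ) ≤ B ^ ℓ := pow_nonneg hB0 _
    simp only [hf]
    nlinarith
  have hfpos : ∀ ℓ : ℕ, 1 ≤ f ℓ := by
    intro ℓ
    have := one_le_pow₀ (by linarith : (1:ℤ) ≤ B) (n := ℓ)
    linarith [hpow ℓ]
  have hf0 : f 0 = m := by simp [hf]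
  have hex : ∃ ℓ : ℕ, M ≤ f ℓ := by
    refine ⟨M.toNat, ?_⟩
    have h1 : (M.toNat : ℤ) < 2 ^ M.toNat := by exact_mod_cast (Nat.lt_two_pow_self (n := M.toNat))
    have h2 : (2:ℤ) ^ M.toNat ≤ B ^ M.toNat := pow_le_pow_left₀ (by norm_num) hB _
    have h3 : M ≤ (M.toNat : ℤ) := by omega
    linarith [hpow M.toNat]
  classical
  set L := Nat.find hex with hL
  have hLM : M ≤ f L := Nat.find_spec hex
  have hLlt : ∀ n < L, f n < M := by
    intro n hn
    have := Nat.find_min hex hn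
    omega
  have hLpos : 0 < L := by
    by_contra h
    have : L = 0 := by omega
    rw [this] at hLM
    rw [hf0] at hLM
    omega
  -- upper bound at L
  have hLub : f L ≤ B * M - 1 := by
    obtain ⟨n, hn⟩ : ∃ n, L = n + 1 := ⟨L - 1, by omega⟩
    have h1 : f n ≤ M - 1 := by
      have := hLlt n (by omega); omega
    have h2 := (hb (n + 1) (by omega)).2
    have h3 := hstep n
    rw [hn]
    nlinarith
  -- once past M, values exceed B*M - 1
  have hafter : ∀ j : ℕ, B * M ≤ f (L + 1 + j) := by
    intro j
    induction j with
    | zero =>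
      have := hstep L
      have := (hb (L + 1) (by omega)).1
      nlinarith
    | succ j ih =>
      have h1 := hstep (L + 1 + j)
      have h2 := (hb (L + 1 + j + 1) (by omega)).1
      have hfM : (0:ℤ) ≤ f (L + 1 + j) := by linarith [hfpos (L + 1 + j)]
      have : L + 1 + (j + 1) = (L + 1 + j) + 1 := by omega
      rw [this, h1]
      nlinarith
  refine ⟨L, ⟨hLpos, hLM, hLub⟩, ?_⟩
  rintro ℓ ⟨hℓpos, hℓ1, hℓ2⟩
  change M ≤ f ℓ at hℓ1
  change f ℓ ≤ B * M - 1 at hℓ2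
  by_contra hne
  rcases lt_or_gt_of_ne hne with h | h
  · exact absurd hℓ1 (not_le.mpr (hLlt ℓ h))
  · obtain ⟨j, rfl⟩ : ∃ j, ℓ = L + 1 + j := ⟨ℓ - L - 1, by omega⟩
    have := hafter j
    linarith
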